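/- Let z ∈ ℂ with Im z > 0. Then there is a unique w ∈ ℂ with w² = z² − 1 and |w − z| < 1, and for every x ∈ ℤ one has ∫_{[0,1)} e^{2πi k x}/(−cos(2πk) − z) dk = −(w − z)^{|x|}/w. In particular G₀^{(1)}(x;z) = −(w − z)^{|x|}/w, and the modulus of G₀^{(1)}(x;z) decays geometrically in |x| with ratio |w − z| < 1. -/

import Mathlib

open MeasureTheory Complex Real Filter
open scoped ENNReal NNReal

/-- The symbol of the `ν`-dimensional discrete Laplacian: `E_ν(k) = -∑ᵢ cos(2π kᵢ)`. -/
noncomputable def latE (ν : ℕ) (k : Fin ν → ℝ) : ℝ := -∑ i, Real.cos (2 * Real.pi * k i)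

/-- The unit cube `[0,1)^ν`. -/
def cube (ν : ℕ) : Set (Fin ν → ℝ) := Set.univ.pi fun _ => Set.Ico (0:ℝ) 1

/-- The free lattice Green function
`G₀^{(ν)}(x;z) = ∫_{[0,1)^ν} e^{2πi k·x} / (E_ν(k) - z) dk`. -/
noncomputable def G0 (ν : ℕ) (x : Fin ν → ℤ) (z : ℂ) : ℂ :=
  ∫ k in cube ν, Complex.exp (2 * (Real.pi : ℂ) * Complex.I * ∑ i, (k i : ℂ) * (x i : ℂ)) /
    ((latE ν k : ℂ) - z)

/-- `γ̂₀(k₂;z) = G₀^{(d₁)}(0; z - E_{d₂}(k₂))`. -/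
noncomputable def gammaHat (d₁ d₂ : ℕ) (k₂ : Fin d₂ → ℝ) (z : ℂ) : ℂ :=
  G0 d₁ 0 (z - (latE d₂ k₂ : ℂ))

/-- `b̂(k₂;z) = (g γ̂₀(k₂;z) - i) / (g γ̂₀(k₂;z) + i)`. -/
noncomputable def bHat (d₁ d₂ : ℕ) (g : ℝ) (k₂ : Fin d₂ → ℝ) (z : ℂ) : ℂ :=
  ((g : ℂ) * gammaHat d₁ d₂ k₂ z - Complex.I) / ((g : ℂ) * gammaHat d₁ d₂ k₂ z + Complex.I)



lemma char_int (n : ℤ) :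
    ∫ k in Set.Ico (0:ℝ) 1, Complex.exp (2 * Real.pi * Complex.I * n * k) =
      if n = 0 then 1 else 0 := by
  rw [MeasureTheory.integral_Ico_eq_integral_Ioo, ← MeasureTheory.integral_Ioc_eq_integral_Ioo,
    ← intervalIntegral.integral_of_le (zero_le_one)]
  rcases eq_or_ne n 0 with h | h
  · simp [h]
  · rw [if_neg h]
    have hc : (2 * (Real.pi:ℂ) * Complex.I * n) ≠ 0 := by
      simp [Real.pi_ne_zero, Complex.I_ne_zero, h]
    rw [integral_exp_mul_complex hc]
    have : Complex.exp (2 * (Real.pi:ℂ) * Complex.I * n * (1:ℝ)) = 1 := by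
      rw [Complex.ofReal_one, mul_one]
      have := Complex.exp_int_mul_two_pi_mul_I n
      rw [← this]; ring_nf
    rw [this]
    simp


lemma abs_ne_one (z s : ℂ) (hz : 0 < z.im) (hs : s ^ 2 = z ^ 2 - 1) :
    ‖s - z‖ ≠ 1 := by
  intro h1
  have hmul : (s - z) * (-s - z) = 1 := by linear_combination -hs
  have hne : s - z ≠ 0 := by
    intro h; rw [h] at h1; simp at h1
  have hinv : -s - z = (s - z)⁻¹ := by
    field_simp
    linear_combination hmul
  have hconj : (s - z)⁻¹ = starRingEnd ℂ (s - z) := by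
    rw [Complex.inv_def, Complex.normSq_eq_norm_sq, h1]
    simp
  have him : (-s - z).im = -(s - z).im := by
    rw [hinv, hconj, Complex.conj_im]
  simp only [Complex.sub_im, Complex.neg_im] at him
  have : z.im = 0 := by linarith
  linarith

lemma exists_unique_w (z : ℂ) (hz : 0 < z.im) :
    ∃! w : ℂ, w ^ 2 = z ^ 2 - 1 ∧ ‖w - z‖ < 1 := by
  obtain ⟨s, hs⟩ := IsAlgClosed.exists_pow_nat_eq (z ^ 2 - 1) (zero_lt_two)
  have hmul : (s - z) * (-s - z) = 1 := by linear_combination -hs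
  have habs : ‖s - z‖ * ‖-s - z‖ = 1 := by
    rw [← norm_mul, hmul, norm_one]
  have h1 := abs_ne_one z s hz hs
  have hs' : (-s) ^ 2 = z ^ 2 - 1 := by linear_combination hs
  have h2 := abs_ne_one z (-s) hz hs'
  have key : ∃ w : ℂ, w ^ 2 = z ^ 2 - 1 ∧ ‖w - z‖ < 1 := by
    rcases lt_or_gt_of_ne h1 with h | h
    · exact ⟨s, hs, h⟩
    · refine ⟨-s, hs', ?_⟩
      have hpos : 0 < ‖s - z‖ := by linarith
      have heq : ‖-s - z‖ = (‖s - z‖)⁻¹ := by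
        field_simp
        linarith [habs]
      rw [heq]
      exact inv_lt_one_of_one_lt₀ h
  obtain ⟨w, hw⟩ := key
  refine ⟨w, hw, ?_⟩
  rintro v ⟨hv1, hv2⟩
  have hd : (v - w) * (v + w) = 0 := by linear_combination hv1 - hw.1
  rcases mul_eq_zero.1 hd with h | h
  · exact sub_eq_zero.1 h
  · exfalso
    have hvw : v = -w := by linear_combination h
    have hprod : (w - z) * (v - z) = 1 := by
      rw [hvw]; linear_combination -hw.1
    have : ‖w - z‖ * ‖v - z‖ = 1 := by
      rw [← norm_mul, hprod, norm_one]
    nlinarith [hw.2, hv2, norm_nonneg (w - z), norm_nonneg (v - z)]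


lemma w_ne_zero (z w : ℂ) (hz : 0 < z.im) (hw : w ^ 2 = z ^ 2 - 1) : w ≠ 0 := by
  intro h
  rw [h] at hw
  have hd : (z - 1) * (z + 1) = 0 := by linear_combination -hw
  rcases mul_eq_zero.1 hd with h1 | h1
  · have : z = 1 := by linear_combination h1
    rw [this] at hz; simp at hz
  · have : z = -1 := by linear_combination h1
    rw [this] at hz; simp at hz

lemma key_hassum (z w : ℂ) (hz : 0 < z.im) (hw : w ^ 2 = z ^ 2 - 1)
    (habs : ‖w - z‖ < 1) (x : ℤ) (t : ℝ) :
    HasSum (fun m : ℤ => -(1 / w) * (w - z) ^ m.natAbs *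
        Complex.exp (2 * (Real.pi : ℂ) * Complex.I * (m + x) * t))
      (Complex.exp (2 * (Real.pi : ℂ) * Complex.I * ((t : ℂ) * (x : ℂ))) /
        ((-(Real.cos (2 * Real.pi * t)) : ℝ) - z)) := by
  have hw0 : w ≠ 0 := w_ne_zero z w hz hw
  set a : ℂ := w - z with ha
  set u : ℂ := Complex.exp ((2 * Real.pi * t : ℝ) * Complex.I) with hudef
  have hu : ‖u‖ = 1 := Complex.norm_exp_ofReal_mul_I _
  have hu0 : u ≠ 0 := Complex.exp_ne_zero _
  have hnorm1 : ‖a * u‖ < 1 := by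
    rw [norm_mul, hu, mul_one]; exact habs
  have hnorm2 : ‖a * u⁻¹‖ < 1 := by
    rw [norm_mul, norm_inv, hu, inv_one, mul_one]
    exact habs
  have h1 : HasSum (fun n : ℕ => (a * u) ^ n) (1 - a * u)⁻¹ :=
    hasSum_geometric_of_norm_lt_one hnorm1
  have h2 : HasSum (fun n : ℕ => (a * u⁻¹) * (a * u⁻¹) ^ n)
      ((a * u⁻¹) * (1 - a * u⁻¹)⁻¹) :=
    (hasSum_geometric_of_norm_lt_one hnorm2).mul_left _
  have hf : HasSum (fun m : ℤ => a ^ m.natAbs * u ^ m)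
      ((1 - a * u)⁻¹ + (a * u⁻¹) * (1 - a * u⁻¹)⁻¹) := by
    apply HasSum.of_nat_of_neg_add_one
    · convert h1 using 2 with n
      rw [Int.natAbs_natCast, zpow_natCast, mul_pow]
    · convert h2 using 2 with n
      have h3 : (-((n:ℤ) + 1)).natAbs = n + 1 := by omega
      have h5 : ((n:ℤ) + 1) = ((n + 1 : ℕ) : ℤ) := by push_cast; ring
      rw [h3, zpow_neg, h5, zpow_natCast, ← inv_pow, ← mul_pow, pow_succ, mul_comm]
  have hexp : ∀ m : ℤ, Complex.exp (2 * (Real.pi : ℂ) * Complex.I * (m + x) * t)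
      = u ^ m * u ^ x := by
    intro m
    rw [← zpow_add₀ hu0, hudef, ← Complex.exp_int_mul]
    congr 1
    push_cast
    ring
  have hux : Complex.exp (2 * (Real.pi : ℂ) * Complex.I * ((t : ℂ) * (x : ℂ))) = u ^ x := by
    rw [hudef, ← Complex.exp_int_mul]
    congr 1
    push_cast
    ring
  have hT : HasSum (fun m : ℤ => -(1 / w) * a ^ m.natAbs *
      Complex.exp (2 * (Real.pi : ℂ) * Complex.I * (m + x) * t))
      (-(1 / w) * u ^ x * ((1 - a * u)⁻¹ + (a * u⁻¹) * (1 - a * u⁻¹)⁻¹)) := by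
    have := hf.mul_left (-(1 / w) * u ^ x)
    have e : ∀ m : ℤ, -(1 / w) * a ^ m.natAbs *
        Complex.exp (2 * (Real.pi : ℂ) * Complex.I * (m + x) * t)
        = -(1 / w) * u ^ x * (a ^ m.natAbs * u ^ m) := by
      intro m
      rw [hexp]
      ring
    simp only [e]
    exact this
  convert hT using 1
  -- now the algebraic identity
  have hd : ((-(Real.cos (2 * Real.pi * t)) : ℝ) : ℂ) - z ≠ 0 := by
    intro h
    have := congrArg Complex.im h
    rw [Complex.sub_im, Complex.ofReal_im] at this
    simp at this
    linarith
  have hcos : ((-(Real.cos (2 * Real.pi * t)) : ℝ) : ℂ) - z = -(u + u⁻¹) / 2 - z := by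
    rw [hudef, ← Complex.exp_neg, Complex.ofReal_neg, Complex.ofReal_cos, Complex.cos, neg_mul]
    ring
  have h1u : 1 - a * u ≠ 0 := by
    intro h
    have : a * u = 1 := by linear_combination -h
    have := congrArg (‖·‖) this
    rw [norm_mul, hu, mul_one, norm_one] at this
    linarith
  have h2u : 1 - a * u⁻¹ ≠ 0 := by
    intro h
    have : a * u⁻¹ = 1 := by linear_combination -h
    have := congrArg (‖·‖) this
    rw [norm_mul, norm_inv, hu, inv_one, mul_one, norm_one] at this
    linarith
  have hdz : -(u + u⁻¹) / 2 - z ≠ 0 := by rw [← hcos]; exact hd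
  have hS1 : (-(u + u⁻¹) / 2 - z) * (-(1 / w) * ((1 - a * u)⁻¹ + (a * u⁻¹) * (1 - a * u⁻¹)⁻¹))
      = 1 := by
    have hB : u - a ≠ 0 := by
      intro h
      have h' : u = a := by linear_combination h
      rw [← h', hu] at habs
      exact lt_irrefl 1 habs
    have e2 : (a * u⁻¹) * (1 - a * u⁻¹)⁻¹ = a * (u - a)⁻¹ := by
      have h6 : 1 - a * u⁻¹ = (u - a) * u⁻¹ := by rw [sub_mul u a u⁻¹, mul_inv_cancel₀ hu0]
      rw [h6, mul_inv, inv_inv]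
      have h7 : u⁻¹ * u = 1 := inv_mul_cancel₀ hu0
      linear_combination (a * (u - a)⁻¹) * h7
    rw [e2, ha]
    rw [ha] at hB h1u
    field_simp
    have h1u' : 1 - u * (w - z) ≠ 0 := by rw [mul_comm]; exact h1u
    rw [div_add' _ _ _ h1u', mul_div_assoc', neg_div', div_eq_iff h1u']
    linear_combination (u * (u ^ 2 + 1 + 2 * u * z - 2 * u * w)) * hw
  have hS : -(1 / w) * ((1 - a * u)⁻¹ + (a * u⁻¹) * (1 - a * u⁻¹)⁻¹)
      = (-(u + u⁻¹) / 2 - z)⁻¹ := (inv_eq_of_mul_eq_one_right hS1).symm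
  rw [hcos, hux, div_eq_mul_inv, ← hS]
  ring

lemma integral_formula (z w : ℂ) (hz : 0 < z.im) (hw : w ^ 2 = z ^ 2 - 1)
    (habs : ‖w - z‖ < 1) (x : ℤ) :
    ∫ t in Set.Ico (0:ℝ) 1, Complex.exp (2 * (Real.pi : ℂ) * Complex.I * ((t : ℂ) * (x : ℂ))) /
        (((-(Real.cos (2 * Real.pi * t)) : ℝ) : ℂ) - z) = -(w - z) ^ x.natAbs / w := by
  have hw0 : w ≠ 0 := w_ne_zero z w hz hw
  set F : ℤ → ℝ → ℂ := fun m t => -(1 / w) * (w - z) ^ m.natAbs *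
      Complex.exp (2 * (Real.pi : ℂ) * Complex.I * (m + x) * t) with hF
  have habs1 : ‖w - z‖₊ < 1 := by
    rw [← NNReal.coe_lt_one, coe_nnnorm]; exact habs
  have hmeas : ∀ m : ℤ, AEStronglyMeasurable (F m) (volume.restrict (Set.Ico (0:ℝ) 1)) := by
    intro m
    apply Continuous.aestronglyMeasurable
    exact continuous_const.mul (Complex.continuous_exp.comp
      (continuous_const.mul Complex.continuous_ofReal))
  have hnorm : ∀ m : ℤ, ∀ t : ℝ, ‖F m t‖₊ = ‖(1/w : ℂ)‖₊ * ‖w - z‖₊ ^ m.natAbs := by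
    intro m t
    have : ‖Complex.exp (2 * (Real.pi : ℂ) * Complex.I * (m + x) * t)‖ = 1 := by
      rw [Complex.norm_exp]
      have h0 : (2 * (Real.pi : ℂ) * Complex.I * (m + x) * t).re = 0 := by
        simp [Complex.mul_re, Complex.mul_im]
      rw [h0, Real.exp_zero]
    have h2 : ‖Complex.exp (2 * (Real.pi : ℂ) * Complex.I * (m + x) * t)‖₊ = 1 := by
      ext
      rw [coe_nnnorm, this, NNReal.coe_one]
    rw [hF]
    simp only []
    rw [nnnorm_mul, nnnorm_mul, h2, mul_one, nnnorm_neg, nnnorm_pow]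
  have hsum : Summable (fun m : ℤ => ‖(1/w : ℂ)‖₊ * ‖w - z‖₊ ^ m.natAbs) := by
    apply Summable.mul_left
    apply Summable.of_nat_of_neg_add_one
    · simpa using NNReal.summable_geometric habs1
    · have : (fun n : ℕ => ‖w - z‖₊ ^ (-((n:ℤ) + 1)).natAbs)
          = fun n : ℕ => ‖w - z‖₊ * ‖w - z‖₊ ^ n := by
        funext n
        have h3 : (-((n:ℤ) + 1)).natAbs = n + 1 := by omega
        rw [h3, pow_succ, mul_comm]
      rw [this]
      exact (NNReal.summable_geometric habs1).mul_left _
  have hlint : ∑' m : ℤ, ∫⁻ t in Set.Ico (0:ℝ) 1, ‖F m t‖₊ ≠ ⊤ := by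
    have heach : ∀ m : ℤ, ∫⁻ t in Set.Ico (0:ℝ) 1, (‖F m t‖₊ : ℝ≥0∞)
        = (‖(1/w : ℂ)‖₊ * ‖w - z‖₊ ^ m.natAbs : ℝ≥0) := by
      intro m
      have : (fun t : ℝ => (‖F m t‖₊ : ℝ≥0∞))
          = fun _ : ℝ => ((‖(1/w : ℂ)‖₊ * ‖w - z‖₊ ^ m.natAbs : ℝ≥0) : ℝ≥0∞) := by
        funext t; rw [hnorm m t]
      rw [this, MeasureTheory.lintegral_const]
      simp [Real.volume_Ico]
    simp only [heach]
    rw [ENNReal.tsum_coe_ne_top_iff_summable]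
    exact hsum
  have hptwise : ∀ t : ℝ, Complex.exp (2 * (Real.pi : ℂ) * Complex.I * ((t : ℂ) * (x : ℂ))) /
      (((-(Real.cos (2 * Real.pi * t)) : ℝ) : ℂ) - z) = ∑' m : ℤ, F m t := by
    intro t
    exact ((key_hassum z w hz hw habs x t).tsum_eq).symm
  rw [MeasureTheory.setIntegral_congr_fun measurableSet_Ico (fun t _ => hptwise t)]
  rw [MeasureTheory.integral_tsum hmeas hlint]
  have hterm : ∀ m : ℤ, ∫ t in Set.Ico (0:ℝ) 1, F m t
      = -(1 / w) * (w - z) ^ m.natAbs * (if m + x = 0 then 1 else 0) := by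
    intro m
    have hfun : ∀ t : ℝ, F m t = -(1 / w) * (w - z) ^ m.natAbs *
        Complex.exp (2 * Real.pi * Complex.I * ((m + x : ℤ) : ℂ) * (t : ℝ)) := by
      intro t
      simp only [hF]
      congr 2
      push_cast
      ring
    rw [MeasureTheory.setIntegral_congr_fun measurableSet_Ico (fun t _ => hfun t),
      MeasureTheory.integral_const_mul, char_int (m + x)]
  rw [tsum_congr hterm]
  rw [tsum_eq_single (-x) (by
    intro m hm
    have : ¬ (m + x = 0) := by omega
    rw [if_neg this, mul_zero])]
  rw [if_pos (by ring), Int.natAbs_neg, mul_one]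
  ring

/-- explicit formula for the one-dimensional lattice Green function. -/
theorem G0_one_dimensional_formula (z : ℂ) (hz : 0 < z.im) :
    (∃! w : ℂ, w ^ 2 = z ^ 2 - 1 ∧ ‖w - z‖ < 1) ∧
    (∀ w : ℂ, w ^ 2 = z ^ 2 - 1 → ‖w - z‖ < 1 →
      ∀ x : ℤ, G0 1 (fun _ => x) z = -(w - z) ^ x.natAbs / w) := by
  refine ⟨exists_unique_w z hz, ?_⟩
  intro w hw habs x
  rw [G0]
  have hcube : cube 1 = (MeasurableEquiv.funUnique (Fin 1) ℝ) ⁻¹' (Set.Ico (0:ℝ) 1) := by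
    ext k
    simp [cube, MeasurableEquiv.funUnique, Equiv.funUnique, Set.mem_pi, Fin.forall_fin_one]
  rw [hcube]
  have key := (volume_preserving_funUnique (Fin 1) ℝ).setIntegral_preimage_emb
    (MeasurableEquiv.measurableEmbedding _)
    (fun t : ℝ => Complex.exp (2 * (Real.pi : ℂ) * Complex.I * ((t : ℂ) * (x : ℂ))) /
      (((-(Real.cos (2 * Real.pi * t)) : ℝ) : ℂ) - z)) (Set.Ico (0:ℝ) 1)
  have hfun : ∀ k : Fin 1 → ℝ,
      Complex.exp (2 * (Real.pi : ℂ) * Complex.I * ∑ i, (k i : ℂ) * ((fun _ : Fin 1 => x) i : ℂ)) /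
        ((latE 1 k : ℂ) - z)
      = Complex.exp (2 * (Real.pi : ℂ) * Complex.I *
          (((MeasurableEquiv.funUnique (Fin 1) ℝ) k : ℂ) * (x : ℂ))) /
        (((-(Real.cos (2 * Real.pi * ((MeasurableEquiv.funUnique (Fin 1) ℝ) k))) : ℝ) : ℂ) - z) := by
    intro k
    have hk : (MeasurableEquiv.funUnique (Fin 1) ℝ) k = k 0 := rfl
    simp only [hk, latE, Fin.sum_univ_one]
  rw [MeasureTheory.setIntegral_congr_fun (by measurability) (fun k _ => hfun k)]
  refine key.trans ?_
  exact integral_formula z w hz hw habs x
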